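/- Let t_0 > 0, let H : [0,t_0] → ℝ be continuous, and let ν ∈ ℝ. Suppose a, b, c, d : [0,t_0] → ℝ are differentiable and satisfy a'(t) = H(t) b(t), b'(t) = -ν a(t), c'(t) = H(t) d(t), d'(t) = -ν c(t) - a(t) for all t ∈ [0,t_0], with initial data a(0) = 0, b(0) = 1, c(0) = 0, d(0) = 0. Then a(t_0) d(t_0) - c(t_0) b(t_0) = -∫_0^{t_0} a(t)^2 dt. In particular, if a(t_0) ≠ 0 and a is not identically zero, then d(t_0)/a(t_0) - c(t_0) b(t_0)/a(t_0)^2 < 0. -/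

import Mathlib

set_option maxHeartbeats 1000000


/-- **Green's-identity computation** (from the proof of Lemma 3.2).
For the planar ODE system `(a,b)' = ((0, H),(-ν, 0))(a,b)` with
`(a,b)(0) = (0,1)` and its ν-derivative `(c,d) = (∂_ν a, ∂_ν b)` (which solves
`c' = H d`, `d' = -ν c - a` with `(c,d)(0) = (0,0)`), one has
`a(t₀) d(t₀) - c(t₀) b(t₀) = -∫_0^{t₀} a(t)² dt`; in particular if `a(t₀) ≠ 0`
and `a` is not identically zero then
`d(t₀)/a(t₀) - c(t₀) b(t₀)/a(t₀)² < 0` (so `B(ν) = b(t₀;ν)/a(t₀;ν)` is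
strictly decreasing in `ν`). -/
theorem greens_identity_B_strictly_decreasing
    (t₀ : ℝ) (ht₀ : 0 < t₀)
    (H : ℝ → ℝ) (hH : ContinuousOn H (Set.Icc 0 t₀))
    (ν : ℝ) (a b c d : ℝ → ℝ)
    (ha : ∀ t ∈ Set.Icc (0 : ℝ) t₀,
      HasDerivWithinAt a (H t * b t) (Set.Icc (0 : ℝ) t₀) t)
    (hb : ∀ t ∈ Set.Icc (0 : ℝ) t₀,
      HasDerivWithinAt b (-ν * a t) (Set.Icc (0 : ℝ) t₀) t)
    (hc : ∀ t ∈ Set.Icc (0 : ℝ) t₀,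
      HasDerivWithinAt c (H t * d t) (Set.Icc (0 : ℝ) t₀) t)
    (hd : ∀ t ∈ Set.Icc (0 : ℝ) t₀,
      HasDerivWithinAt d (-ν * c t - a t) (Set.Icc (0 : ℝ) t₀) t)
    (ha0 : a 0 = 0) (hb0 : b 0 = 1) (hc0 : c 0 = 0) (hd0 : d 0 = 0) :
    a t₀ * d t₀ - c t₀ * b t₀ = -∫ t in (0 : ℝ)..t₀, a t ^ 2 ∧
    ((a t₀ ≠ 0 ∧ ∃ t ∈ Set.Icc (0 : ℝ) t₀, a t ≠ 0) →
      d t₀ / a t₀ - c t₀ * b t₀ / a t₀ ^ 2 < 0) := by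
  have hab : (0:ℝ) ≤ t₀ := ht₀.le
  have hIcc : Set.uIcc (0:ℝ) t₀ = Set.Icc 0 t₀ := Set.uIcc_of_le hab
  have haC : ContinuousOn a (Set.Icc 0 t₀) := fun t ht => (ha t ht).continuousWithinAt
  have hbC : ContinuousOn b (Set.Icc 0 t₀) := fun t ht => (hb t ht).continuousWithinAt
  have hcC : ContinuousOn c (Set.Icc 0 t₀) := fun t ht => (hc t ht).continuousWithinAt
  have hdC : ContinuousOn d (Set.Icc 0 t₀) := fun t ht => (hd t ht).continuousWithinAt
  set W : ℝ → ℝ := fun t => a t * d t - c t * b t with hW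
  have hWderiv : ∀ t ∈ Set.Icc (0:ℝ) t₀,
      HasDerivWithinAt W (-(a t ^ 2)) (Set.Icc (0:ℝ) t₀) t := by
    intro t ht
    have h1 := ((ha t ht).mul (hd t ht)).sub ((hc t ht).mul (hb t ht))
    exact h1.congr_deriv (by ring)
  have hWcont : ContinuousOn W (Set.Icc 0 t₀) :=
    ((haC.mul hdC).sub (hcC.mul hbC))
  have hint : IntervalIntegrable (fun t => -(a t ^ 2)) MeasureTheory.volume 0 t₀ := by
    apply ContinuousOn.intervalIntegrable
    rw [hIcc]
    exact ((haC.pow 2).neg)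
  have key : (∫ t in (0:ℝ)..t₀, -(a t ^ 2)) = W t₀ - W 0 := by
    apply intervalIntegral.integral_eq_sub_of_hasDeriv_right_of_le hab hWcont
    · intro x hx
      have hx' : x ∈ Set.Icc (0:ℝ) t₀ := Set.mem_Icc_of_Ioo hx
      have := (hWderiv x hx').hasDerivAt (Icc_mem_nhds hx.1 hx.2)
      exact this.hasDerivWithinAt
    · exact hint
  have hW0 : W 0 = 0 := by simp [hW, ha0, hd0, hc0]
  have hmain : a t₀ * d t₀ - c t₀ * b t₀ = -∫ t in (0:ℝ)..t₀, a t ^ 2 := by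
    have : (∫ t in (0:ℝ)..t₀, -(a t ^ 2)) = -∫ t in (0:ℝ)..t₀, a t ^ 2 :=
      intervalIntegral.integral_neg
    rw [this] at key
    have : W t₀ = -∫ t in (0:ℝ)..t₀, a t ^ 2 := by linarith [key]
    simpa [hW] using this
  refine ⟨hmain, ?_⟩
  rintro ⟨hat₀, -⟩
  -- show the integral is positive
  have hintpos : 0 < ∫ t in (0:ℝ)..t₀, a t ^ 2 := by
    have hcw : ContinuousWithinAt a (Set.Icc 0 t₀) t₀ :=
      haC t₀ (Set.right_mem_Icc.2 hab)
    have hne : {x : ℝ | a x ≠ 0} ∈ nhdsWithin t₀ (Set.Icc 0 t₀) :=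
      hcw (isOpen_ne.mem_nhds hat₀)
    rcases Metric.mem_nhdsWithin_iff.1 hne with ⟨δ, hδ, hδsub⟩
    set x := max 0 (t₀ - δ/2) with hx
    have hxlt : x < t₀ := by
      apply max_lt ht₀
      linarith
    have hsub : Set.Ioc x t₀ ⊆ Function.support (fun t => a t ^ 2) ∩ Set.Ioc 0 t₀ := by
      intro y hy
      have hy1 : 0 < y := lt_of_le_of_lt (le_max_left _ _) hy.1
      have hy2 : t₀ - δ/2 < y := lt_of_le_of_lt (le_max_right _ _) hy.1
      have hymem : y ∈ Metric.ball t₀ δ ∩ Set.Icc 0 t₀ := by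
        constructor
        · rw [Metric.mem_ball, Real.dist_eq, abs_lt]
          constructor <;> linarith [hy.2]
        · exact ⟨hy1.le, hy.2⟩
      have : a y ≠ 0 := hδsub hymem
      exact ⟨by simp [Function.mem_support, pow_eq_zero_iff]; exact this, hy1, hy.2⟩
    have hposmeas : 0 < MeasureTheory.volume
        (Function.support (fun t => a t ^ 2) ∩ Set.Ioc 0 t₀) := by
      refine lt_of_lt_of_le ?_ (MeasureTheory.measure_mono hsub)
      rw [Real.volume_Ioc]
      exact ENNReal.ofReal_pos.2 (by linarith)
    have hnonneg : 0 ≤ᵐ[(MeasureTheory.volume : MeasureTheory.Measure ℝ)]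
        fun t => a t ^ 2 := Filter.Eventually.of_forall fun t => sq_nonneg _
    have hint2 : IntervalIntegrable (fun t => a t ^ 2) MeasureTheory.volume 0 t₀ := by
      apply ContinuousOn.intervalIntegrable
      rw [hIcc]; exact haC.pow 2
    exact (intervalIntegral.integral_pos_iff_support_of_nonneg_ae hnonneg hint2).2
      ⟨ht₀, hposmeas⟩
  have ha2 : 0 < a t₀ ^ 2 := by positivity
  have heq : d t₀ / a t₀ - c t₀ * b t₀ / a t₀ ^ 2
      = (a t₀ * d t₀ - c t₀ * b t₀) / a t₀ ^ 2 := by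
    field_simp
  rw [heq, hmain]
  exact div_neg_of_neg_of_pos (by linarith) ha2
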